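/- Let V = ℝ² with the natural SO(2)-action and Ω ⊂ V be open, SO(2)-invariant, bounded, with Ω^{SO(2)} = ∅ (i.e., 0 ∉ Ω). Then for any C¹ SO(2)-invariant function φ : V → ℝ with (∇φ)⁻¹(0) ∩ ∂Ω = ∅, the Brouwer degree deg_B(∇φ, Ω, 0) = 0. -/

import Mathlib

open Set

/-- Rotation by angle `s` on the plane `ℝ²` (the natural `SO(2)`-action). -/
noncomputable def rotE (s : ℝ) (v : EuclideanSpace ℝ (Fin 2)) : EuclideanSpace ℝ (Fin 2) :=
  (WithLp.equiv 2 (Fin 2 → ℝ)).symm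
    ![Real.cos s * v 0 - Real.sin s * v 1, Real.sin s * v 0 + Real.cos s * v 1]

noncomputable def Jrot (v : EuclideanSpace ℝ (Fin 2)) : EuclideanSpace ℝ (Fin 2) :=
  (WithLp.equiv 2 (Fin 2 → ℝ)).symm ![-(v 1), v 0]

lemma Jrot_apply0 (v : EuclideanSpace ℝ (Fin 2)) : Jrot v 0 = -(v 1) := rfl
lemma Jrot_apply1 (v : EuclideanSpace ℝ (Fin 2)) : Jrot v 1 = v 0 := rfl

lemma rotE_eq (s : ℝ) (v : EuclideanSpace ℝ (Fin 2)) :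
    rotE s v = Real.cos s • v + Real.sin s • Jrot v := by
  ext i
  fin_cases i <;>
    simp [rotE, Jrot, PiLp.add_apply, PiLp.smul_apply, smul_eq_mul] <;> ring

lemma inner_gradient_eq (φ : EuclideanSpace ℝ (Fin 2) → ℝ) (v y : EuclideanSpace ℝ (Fin 2)) :
    @inner ℝ _ _ (gradient φ v) y = fderiv ℝ φ v y :=
  InnerProductSpace.toDual_symm_apply

lemma hasDerivAt_rotE (v : EuclideanSpace ℝ (Fin 2)) :
    HasDerivAt (fun s => rotE s v) (Jrot v) 0 := by
  have h : HasDerivAt (fun s => Real.cos s • v + Real.sin s • Jrot v)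
      ((-Real.sin 0) • v + Real.cos 0 • Jrot v) 0 :=
    ((Real.hasDerivAt_cos 0).smul_const v).add ((Real.hasDerivAt_sin 0).smul_const (Jrot v))
  simp only [Real.sin_zero, Real.cos_zero, neg_zero, zero_smul, zero_add, one_smul] at h
  have heq : (fun s => rotE s v) = fun s => Real.cos s • v + Real.sin s • Jrot v :=
    funext fun s => rotE_eq s v
  rw [heq]; exact h

lemma inner_gradient_Jrot (φ : EuclideanSpace ℝ (Fin 2) → ℝ) (hφ : ContDiff ℝ 1 φ)
    (hφinv : ∀ (s : ℝ) v, φ (rotE s v) = φ v) (v : EuclideanSpace ℝ (Fin 2)) :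
    @inner ℝ _ _ (gradient φ v) (Jrot v) = 0 := by
  have hd : HasDerivAt (fun s => φ (rotE s v)) (fderiv ℝ φ v (Jrot v)) 0 := by
    have h0 : rotE 0 v = v := by
      ext i; fin_cases i <;> simp [rotE]
    have hF : HasFDerivAt φ (fderiv ℝ φ v) (rotE 0 v) := by
      rw [h0]; exact (hφ.differentiable one_ne_zero v).hasFDerivAt
    exact hF.comp_hasDerivAt 0 (hasDerivAt_rotE v)
  have hc : HasDerivAt (fun s => φ (rotE s v)) 0 0 := by
    have : (fun s => φ (rotE s v)) = fun _ => φ v := funext fun s => hφinv s v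
    rw [this]; exact hasDerivAt_const 0 (φ v)
  rw [inner_gradient_eq, hd.unique hc]

lemma inner_Jrot_eval (g v : EuclideanSpace ℝ (Fin 2)) :
    @inner ℝ _ _ g (Jrot v) = g 0 * (-(v 1)) + g 1 * v 0 := by
  simp [PiLp.inner_apply, RCLike.inner_apply, Fin.sum_univ_two, Jrot_apply0, Jrot_apply1]; ring

lemma grad_rel (φ : EuclideanSpace ℝ (Fin 2) → ℝ) (hφ : ContDiff ℝ 1 φ)
    (hφinv : ∀ (s : ℝ) v, φ (rotE s v) = φ v) (v : EuclideanSpace ℝ (Fin 2)) :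
    gradient φ v 1 * v 0 = gradient φ v 0 * v 1 := by
  have := inner_gradient_Jrot φ hφ hφinv v
  rw [inner_Jrot_eval] at this
  linarith

lemma continuous_gradient (φ : EuclideanSpace ℝ (Fin 2) → ℝ) (hφ : ContDiff ℝ 1 φ) :
    Continuous (gradient φ) :=
  (InnerProductSpace.toDual ℝ (EuclideanSpace ℝ (Fin 2))).symm.continuous.comp
    (hφ.continuous_fderiv one_ne_zero)

lemma continuous_Jrot : Continuous Jrot := by
  have h : Continuous fun v : EuclideanSpace ℝ (Fin 2) => ![-(v 1), v 0] := by
    apply continuous_pi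
    intro i
    fin_cases i
    · exact (EuclideanSpace.proj (1 : Fin 2)).continuous.neg
    · simpa using (EuclideanSpace.proj (0 : Fin 2)).continuous
  exact (PiLp.continuousLinearEquiv 2 ℝ (fun _ : Fin 2 => ℝ)).symm.continuous.comp h

lemma gradient_at_zero (φ : EuclideanSpace ℝ (Fin 2) → ℝ) (hφ : ContDiff ℝ 1 φ)
    (hφinv : ∀ (s : ℝ) v, φ (rotE s v) = φ v) : gradient φ 0 = 0 := by
  have hc := continuous_gradient φ hφ
  have hE : ∀ (i : Fin 2), Continuous fun v : EuclideanSpace ℝ (Fin 2) => gradient φ v i :=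
    fun i => (EuclideanSpace.proj i).continuous.comp hc
  have key : ∀ i : Fin 2, gradient φ 0 i = 0 := by
    intro i
    fin_cases i
    · have heq : (fun ε : ℝ => gradient φ (ε • EuclideanSpace.single (1 : Fin 2) (1:ℝ)) 0)
          = fun _ : ℝ => (0:ℝ) := by
        apply Continuous.ext_on (dense_compl_singleton (0:ℝ))
        · exact ((hE 0).comp (continuous_id.smul continuous_const))
        · exact continuous_const
        · intro ε hε
          have h' := grad_rel φ hφ hφinv (ε • EuclideanSpace.single (1 : Fin 2) (1:ℝ))
          simp [EuclideanSpace.single_apply] at h'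
          simpa using h'.resolve_right hε
      have := congrFun heq 0
      simpa using this
    · have heq : (fun ε : ℝ => gradient φ (ε • EuclideanSpace.single (0 : Fin 2) (1:ℝ)) 1)
          = fun _ : ℝ => (0:ℝ) := by
        apply Continuous.ext_on (dense_compl_singleton (0:ℝ))
        · exact ((hE 1).comp (continuous_id.smul continuous_const))
        · exact continuous_const
        · intro ε hε
          have h' := grad_rel φ hφ hφinv (ε • EuclideanSpace.single (0 : Fin 2) (1:ℝ))
          simp [EuclideanSpace.single_apply] at h'
          simpa using h'.resolve_right hε
      have := congrFun heq 0
      simpa using this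
  ext i
  simpa using key i

lemma Jrot_ne_zero {x : EuclideanSpace ℝ (Fin 2)} (hx : x ≠ 0) : Jrot x ≠ 0 := by
  intro h
  apply hx
  have h0 : Jrot x 0 = (0 : EuclideanSpace ℝ (Fin 2)) 0 := by rw [h]
  have h1 : Jrot x 1 = (0 : EuclideanSpace ℝ (Fin 2)) 1 := by rw [h]
  rw [Jrot_apply0] at h0
  rw [Jrot_apply1] at h1
  ext i
  fin_cases i
  · simpa using h1
  · simpa using neg_eq_zero.mp h0

lemma inner_Jrot_self (x : EuclideanSpace ℝ (Fin 2)) :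
    @inner ℝ _ _ (Jrot x) (Jrot x) = x 0 * x 0 + x 1 * x 1 := by
  rw [inner_Jrot_eval, Jrot_apply0, Jrot_apply1]; ring

lemma sq_sum_pos {x : EuclideanSpace ℝ (Fin 2)} (hx : x ≠ 0) :
    0 < x 0 * x 0 + x 1 * x 1 := by
  rcases lt_or_eq_of_le (add_nonneg (mul_self_nonneg (x 0)) (mul_self_nonneg (x 1))) with h | h
  · linarith
  · exfalso
    apply hx
    have h0 : x 0 = 0 := by nlinarith [mul_self_nonneg (x 0), mul_self_nonneg (x 1)]
    have h1 : x 1 = 0 := by nlinarith [mul_self_nonneg (x 0), mul_self_nonneg (x 1)]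
    ext i; fin_cases i <;> simpa [h0, h1]

/-- Let `Ω ⊆ ℝ²` be open, `SO(2)`-invariant, bounded, with no
`SO(2)`-fixed points (`Ω^{SO(2)} = ∅`). Then for any `C¹` `SO(2)`-invariant
`φ : ℝ² → ℝ` with `∇φ` nonvanishing on `∂Ω`, the Brouwer degree
`deg_B(∇φ, Ω, 0)` vanishes. Here `degB` is any map satisfying the Amann–Weiss
axioms (normalization, additivity, homotopy invariance) which characterize the
Brouwer degree. -/
theorem equivariant_gradient_brouwer_degree_zero
    (degB : (EuclideanSpace ℝ (Fin 2) → EuclideanSpace ℝ (Fin 2)) →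
      Set (EuclideanSpace ℝ (Fin 2)) → ℤ)
    -- normalization
    (hnorm : ∀ (U : Set (EuclideanSpace ℝ (Fin 2))), IsOpen U → Bornology.IsBounded U →
      ∀ y ∈ U, degB (fun x => x - y) U = 1)
    -- additivity / excision
    (hadd : ∀ (f : EuclideanSpace ℝ (Fin 2) → EuclideanSpace ℝ (Fin 2))
      (U U₁ U₂ : Set (EuclideanSpace ℝ (Fin 2))),
      IsOpen U → Bornology.IsBounded U → IsOpen U₁ → IsOpen U₂ →
      U₁ ⊆ U → U₂ ⊆ U → Disjoint U₁ U₂ → Continuous f →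
      (∀ x ∈ closure U \ (U₁ ∪ U₂), f x ≠ 0) →
      degB f U = degB f U₁ + degB f U₂)
    -- homotopy invariance
    (hhom : ∀ (Ht : ℝ → EuclideanSpace ℝ (Fin 2) → EuclideanSpace ℝ (Fin 2))
      (U : Set (EuclideanSpace ℝ (Fin 2))),
      IsOpen U → Bornology.IsBounded U →
      Continuous (fun p : ℝ × EuclideanSpace ℝ (Fin 2) => Ht p.1 p.2) →
      (∀ t ∈ Icc (0 : ℝ) 1, ∀ x ∈ frontier U, Ht t x ≠ 0) →
      degB (Ht 0) U = degB (Ht 1) U)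
    (Ω : Set (EuclideanSpace ℝ (Fin 2)))
    (hΩopen : IsOpen Ω) (hΩbdd : Bornology.IsBounded Ω)
    (hΩinv : ∀ (s : ℝ), ∀ v ∈ Ω, rotE s v ∈ Ω)
    (hΩfix : {v ∈ Ω | ∀ s : ℝ, rotE s v = v} = ∅)
    (φ : EuclideanSpace ℝ (Fin 2) → ℝ) (hφ : ContDiff ℝ 1 φ)
    (hφinv : ∀ (s : ℝ) v, φ (rotE s v) = φ v)
    (hadm : ∀ v ∈ frontier Ω, gradient φ v ≠ 0) :
    degB (gradient φ) Ω = 0 := by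
  -- 0 is not in Ω
  have h0Ω : (0 : EuclideanSpace ℝ (Fin 2)) ∉ Ω := by
    intro h
    have hrot : ∀ s : ℝ, rotE s (0 : EuclideanSpace ℝ (Fin 2)) = 0 := by
      intro s; ext i; fin_cases i <;> simp [rotE]
    have : (0 : EuclideanSpace ℝ (Fin 2)) ∈
        {v ∈ Ω | ∀ s : ℝ, rotE s v = v} := ⟨h, hrot⟩
    rw [hΩfix] at this
    exact this
  -- 0 is not on the frontier
  have h0F : (0 : EuclideanSpace ℝ (Fin 2)) ∉ frontier Ω := by
    intro h
    exact hadm 0 h (gradient_at_zero φ hφ hφinv)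
  -- 0 is not in the closure
  have h0cl : (0 : EuclideanSpace ℝ (Fin 2)) ∉ closure Ω := by
    intro h
    rw [closure_eq_interior_union_frontier, hΩopen.interior_eq] at h
    exact h.elim h0Ω h0F
  -- the homotopy
  set Ht : ℝ → EuclideanSpace ℝ (Fin 2) → EuclideanSpace ℝ (Fin 2) :=
    fun t v => (1 - t) • gradient φ v + t • Jrot v with hHt
  have hcont : Continuous (fun p : ℝ × EuclideanSpace ℝ (Fin 2) => Ht p.1 p.2) := by
    apply Continuous.add
    · exact (continuous_const.sub continuous_fst).smul
        ((continuous_gradient φ hφ).comp continuous_snd)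
    · exact continuous_fst.smul (continuous_Jrot.comp continuous_snd)
  have hbd : ∀ t ∈ Icc (0 : ℝ) 1, ∀ x ∈ frontier Ω, Ht t x ≠ 0 := by
    intro t ht x hx h
    have hxne : x ≠ 0 := fun h' => h0F (h' ▸ hx)
    have hinner : @inner ℝ _ _ (Ht t x) (Jrot x) = t * (x 0 * x 0 + x 1 * x 1) := by
      rw [hHt]
      simp only [inner_add_left, real_inner_smul_left]
      rw [inner_gradient_Jrot φ hφ hφinv x, inner_Jrot_self]
      ring
    rw [h, inner_zero_left] at hinner
    have hpos := sq_sum_pos hxne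
    have ht0 : t = 0 := by
      rcases mul_eq_zero.mp hinner.symm with h' | h'
      · exact h'
      · linarith
    apply hadm x hx
    have := congrArg (fun f => f) h
    rw [ht0] at h
    simpa [hHt] using h
  have hdeg := hhom Ht Ω hΩopen hΩbdd hcont hbd
  have hHt0 : Ht 0 = gradient φ := by funext v; simp [hHt]
  have hHt1 : Ht 1 = Jrot := by funext v; simp [hHt]
  rw [hHt0, hHt1] at hdeg
  -- degree of Jrot on Ω is zero since Jrot is nonvanishing on closure Ω
  have hempty : degB Jrot ∅ = 0 := by
    have := hadd Jrot ∅ ∅ ∅ isOpen_empty Bornology.isBounded_empty isOpen_empty isOpen_empty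
      (empty_subset _) (empty_subset _) (by simp) continuous_Jrot (by simp)
    omega
  have hJ : degB Jrot Ω = 0 := by
    have := hadd Jrot Ω ∅ ∅ hΩopen hΩbdd isOpen_empty isOpen_empty
      (empty_subset _) (empty_subset _) (by simp) continuous_Jrot ?_
    · rw [this, hempty]; ring
    · intro x hx
      have hxcl : x ∈ closure Ω := hx.1
      have hxne : x ≠ 0 := fun h' => h0cl (h' ▸ hxcl)
      exact Jrot_ne_zero hxne
  rw [hdeg, hJ]
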